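/- With φ : ℤⁿ → M defined recursively via moduli (a_i) and overflow vectors (o_i), the map φ preserves addition: for all x, y ∈ ℤⁿ, φ(x + y) = φ(φ(x) + φ(y)). -/
import Mathlib


/-- The recursively defined sketch map `φ` preserves addition:
`φ(x + y) = φ(φ(x) + φ(y))`. -/
theorem statement8 {n : ℕ} (a : Fin n → ℤ) (ha : ∀ i, 0 < a i)
    (o : Fin n → Fin n → ℤ)
    (ho_supp : ∀ i j, i ≤ j → o i j = 0)
    (ho_range : ∀ i j, j < i → 0 ≤ o i j ∧ o i j < a j)
    (φ : (Fin n → ℤ) → (Fin n → ℤ))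
    (hφ0 : φ 0 = 0)
    (hφrec : ∀ (i : Fin n) (x : Fin n → ℤ) (r : ℤ), (∀ j, i ≤ j → x j = 0) →
      φ (x + r • Pi.single i 1) =
        (r % a i) • Pi.single i 1 + φ (x + (r / a i) • o i)) :
    ∀ x y : Fin n → ℤ, φ (x + y) = φ (φ x + φ y) := by
  classical
  set v : Fin n → Fin n → ℤ := fun i => a i • Pi.single i 1 - o i with hv
  set P : (Fin n → ℤ) → Prop := fun d => ∃ c : Fin n → ℤ, d = ∑ i, c i • v i with hP
  have hP0 : P 0 := ⟨0, by simp⟩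
  have hPadd : ∀ d1 d2, P d1 → P d2 → P (d1 + d2) := by
    rintro d1 d2 ⟨c1, h1⟩ ⟨c2, h2⟩
    exact ⟨c1 + c2, by simp [h1, h2, add_smul, Finset.sum_add_distrib]⟩
  have hPneg : ∀ d, P d → P (-d) := by
    rintro d ⟨c, h⟩
    refine ⟨-c, ?_⟩
    simp [h, neg_smul, Finset.sum_neg_distrib]
  have hPsingle : ∀ (i : Fin n) (t : ℤ), P (t • v i) := by
    intro i t
    refine ⟨fun j => if j = i then t else 0, ?_⟩
    simp [ite_smul]
  -- key structural lemma
  have key : ∀ k : ℕ, k ≤ n → ∀ z : Fin n → ℤ, (∀ j : Fin n, k ≤ (j : ℕ) → z j = 0) →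
      P (φ z - z) ∧ (∀ i, 0 ≤ φ z i ∧ φ z i < a i) ∧
        (∀ j : Fin n, k ≤ (j : ℕ) → φ z j = 0) := by
    intro k
    induction k with
    | zero =>
      intro _ z hz
      have hz0 : z = 0 := funext fun j => hz j (Nat.zero_le _)
      subst hz0
      refine ⟨by simpa [hφ0] using hP0, fun i => ?_, fun j _ => by simp [hφ0]⟩
      simp [hφ0]
      exact ha i
    | succ k ih =>
      intro hk z hz
      have hk' : k < n := Nat.lt_of_succ_le hk
      have hkn : k ≤ n := le_of_lt hk'
      set i : Fin n := ⟨k, hk'⟩ with hi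
      set x : Fin n → ℤ := Function.update z i 0 with hxdef
      have hx : ∀ j, i ≤ j → x j = 0 := by
        intro j hj
        by_cases hji : j = i
        · subst hji; simp [hxdef]
        · have hij : (i : ℕ) < (j : ℕ) := by
            rcases lt_or_eq_of_le hj with h | h
            · exact h
            · exact absurd h.symm hji
          rw [hxdef, Function.update_of_ne hji]
          exact hz j hij
      have hzx : z = x + z i • Pi.single i 1 := by
        funext j
        by_cases hji : j = i
        · subst hji; simp [hxdef]
        · simp [hxdef, Function.update_of_ne hji, Pi.single_apply, hji]
      set q : ℤ := z i / a i with hq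
      set w : Fin n → ℤ := x + q • o i with hwdef
      have hw : ∀ j : Fin n, k ≤ (j : ℕ) → w j = 0 := by
        intro j hj
        have hij : i ≤ j := hj
        simp [hwdef, hx j hij, ho_supp i j hij]
      obtain ⟨hPw, hboxw, hzerow⟩ := ih hkn w hw
      have hrec := hφrec i x (z i) hx
      rw [← hzx, ← hq, ← hwdef] at hrec
      have hφz : ∀ j, φ z j = (z i % a i) * (if j = i then 1 else 0) + φ w j := by
        intro j
        rw [hrec]
        by_cases hji : j = i
        · subst hji; simp
        · simp [Pi.single_apply, hji]
      have heq : φ z - z = (φ w - w) + (-q) • v i := by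
        funext j
        have hmod : z i % a i = z i - a i * q := by rw [hq, Int.emod_def]
        have hzj : z j = x j + z i * (if j = i then 1 else 0) := by
          by_cases hji : j = i
          · subst hji; simp [hxdef]
          · simp [hxdef, Function.update_of_ne hji, hji]
        have hwj : w j = x j + q * o i j := by rw [hwdef]; simp
        have hvj : v i j = a i * (if j = i then 1 else 0) - o i j := by
          simp [hv, Pi.single_apply]
        simp only [Pi.sub_apply, Pi.add_apply, Pi.smul_apply, smul_eq_mul, Pi.neg_apply]
        rw [hφz j, hzj, hwj, hvj, hmod]
        ring
      refine ⟨?_, ?_, ?_⟩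
      · rw [heq]
        exact hPadd _ _ hPw (hPsingle i (-q))
      · intro j
        by_cases hji : j = i
        · subst hji
          have h0 : φ w i = 0 := hzerow i (le_refl k)
          rw [hφz i, h0, if_pos rfl]
          constructor
          · simpa using Int.emod_nonneg (z i) (ne_of_gt (ha i))
          · simpa using Int.emod_lt_of_pos (z i) (ha i)
        · rw [hφz j, if_neg hji]
          simpa using hboxw j
      · intro j hj
        have hji : j ≠ i := by
          intro h
          rw [h] at hj
          simp [hi] at hj
        have hj' : k ≤ (j : ℕ) := le_of_lt (Nat.lt_of_succ_le hj)
        rw [hφz j, if_neg hji, hzerow j hj']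
        ring
  have keyAll : ∀ z, P (φ z - z) ∧ ∀ i, 0 ≤ φ z i ∧ φ z i < a i := by
    intro z
    have := key n le_rfl z (fun j hj => absurd j.isLt (not_lt.2 hj))
    exact ⟨this.1, this.2.1⟩
  -- uniqueness of box representatives
  have uniq : ∀ d : Fin n → ℤ, P d → (∀ i, -a i < d i ∧ d i < a i) → d = 0 := by
    rintro d ⟨c, hc⟩ hd
    have hc0 : ∀ i, c i = 0 := by
      by_contra h
      push_neg at h
      obtain ⟨i0, hi0⟩ := h
      set S : Finset (Fin n) := Finset.univ.filter (fun j => c j ≠ 0) with hS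
      have hSne : S.Nonempty := ⟨i0, by simp [hS, hi0]⟩
      set i : Fin n := S.max' hSne with hidef
      have hiS : c i ≠ 0 := by
        have := S.max'_mem hSne
        simpa [hS] using this
      have hdi : d i = c i * a i := by
        rw [hc, Finset.sum_apply]
        rw [Finset.sum_eq_single i]
        · simp [hv, Pi.single_apply, ho_supp i i le_rfl]
        · intro j _ hji
          by_cases hcj : c j = 0
          · simp [hcj]
          · have hjS : j ∈ S := by simp [hS, hcj]
            have hji' : j ≤ i := S.le_max' j hjS
            have : (if i = j then (1:ℤ) else 0) = 0 := by
              rw [if_neg]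
              intro h; exact hji h.symm
            simp [hv, Pi.single_apply, this, ho_supp j i hji']
        · simp
      have h1 : |c i * a i| < a i := by
        rw [abs_lt]
        exact ⟨by rw [← hdi]; exact (hd i).1, by rw [← hdi]; exact (hd i).2⟩
      rw [abs_mul, abs_of_pos (ha i)] at h1
      have h2 : |c i| < 1 := by nlinarith [abs_nonneg (c i), ha i]
      have h3 : c i = 0 := by
        rcases abs_cases (c i) with ⟨h, _⟩ | ⟨h, _⟩ <;> omega
      exact hiS h3
    rw [hc]
    simp [hc0]
  intro x y
  obtain ⟨hP1, hb1⟩ := keyAll (x + y)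
  obtain ⟨hP2, hb2⟩ := keyAll x
  obtain ⟨hP3, hb3⟩ := keyAll y
  obtain ⟨hP4, hb4⟩ := keyAll (φ x + φ y)
  have hPd : P (φ (x + y) - φ (φ x + φ y)) := by
    have h := hPadd _ _ (hPadd _ _ hP1 (hPneg _ hP4)) (hPadd _ _ (hPneg _ hP2) (hPneg _ hP3))
    have heq : φ (x + y) - φ (φ x + φ y) =
        (φ (x + y) - (x + y)) + (-(φ (φ x + φ y) - (φ x + φ y))) +
        (-(φ x - x) + -(φ y - y)) := by
      funext j; simp; ring
    rw [heq]
    exact h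
  have hbd : ∀ i, -a i < (φ (x + y) - φ (φ x + φ y)) i ∧
      (φ (x + y) - φ (φ x + φ y)) i < a i := by
    intro i
    have h1 := hb1 i
    have h4 := hb4 i
    constructor <;> simp only [Pi.sub_apply] <;> omega
  have := uniq _ hPd hbd
  have := sub_eq_zero.mp (funext fun j => congrFun this j)
  exact this
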